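/- Let G be a finitely generated group, n a natural number, and S a normal subgroup of G containing the n-th term γ_n(G) of the lower central series of G. Then the quotient group S/[G,S], where [G,S] is the subgroup generated by all commutators g·s·g⁻¹·s⁻¹ with g ∈ G and s ∈ S, is a finitely generated commutative group. -/

import Mathlib

open Subgroup
open scoped Pointwise
open scoped commutatorElement

section Aux

variable {G : Type*} [Group G]

/-- A subgroup of a finitely generated commutative group is finitely generated. -/
lemma aux_fg_subgroup_of_comm {A : Type*} [CommGroup A] [Group.FG A] (B : Subgroup A) :
    Group.FG B := by
  rw [Group.fg_iff_subgroup_fg, Subgroup.fg_iff_add_fg]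
  have h1 : Module.Finite ℤ (Additive A) :=
    Module.Finite.iff_addGroup_fg.2 inferInstance
  have := (IsNoetherian.noetherian (AddSubgroup.toIntSubmodule
    (Subgroup.toAddSubgroup B : AddSubgroup (Additive A))))
  rw [Submodule.fg_iff_addSubgroup_fg] at this
  simpa using this

/-- An extension of a finitely generated group by a finitely generated group is
finitely generated. -/
lemma aux_fg_of_fg_of_fg_quotient {A : Type*} [Group A] (N : Subgroup A) [N.Normal]
    (h1 : Group.FG N) (h2 : Group.FG (A ⧸ N)) : Group.FG A := by
  obtain ⟨T, hTN⟩ := (Group.fg_iff_subgroup_fg N).1 h1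
  obtain ⟨U, hU, hUfin⟩ := Group.fg_iff.1 h2
  set f := QuotientGroup.mk' N with hf
  have hsurj : Function.Surjective f := QuotientGroup.mk'_surjective N
  set U' : Set A := (fun u => Classical.choose (hsurj u)) '' U with hU'
  have hU'fin : U'.Finite := hUfin.image _
  refine Group.fg_iff.2 ⟨↑T ∪ U', ?_, Set.Finite.union T.finite_toSet hU'fin⟩
  set H := Subgroup.closure (↑T ∪ U') with hH
  have hNH : N ≤ H := by
    rw [← hTN]
    exact Subgroup.closure_mono Set.subset_union_left
  have hmap : Subgroup.map f H = ⊤ := by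
    rw [eq_top_iff, ← hU]
    refine Subgroup.closure_le _ |>.2 fun u hu => ?_
    refine ⟨Classical.choose (hsurj u), ?_, Classical.choose_spec (hsurj u)⟩
    exact Subgroup.subset_closure (Set.mem_union_right _ ⟨u, hu, rfl⟩)
  have := congrArg (Subgroup.comap f) hmap
  rwa [Subgroup.comap_map_eq, QuotientGroup.ker_mk', Subgroup.comap_top,
    sup_of_le_left hNH] at this

/-- The quotient `S/[G,S]` is commutative. -/
lemma aux_quot_mul_comm (S : Subgroup G) [S.Normal] :
    ∀ x y : S ⧸ (⁅(⊤ : Subgroup G), S⁆.subgroupOf S), x * y = y * x := by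
  intro x y
  induction x using QuotientGroup.induction_on with | _ a =>
  induction y using QuotientGroup.induction_on with | _ b =>
  rw [← QuotientGroup.mk_mul, ← QuotientGroup.mk_mul, QuotientGroup.eq,
    Subgroup.mem_subgroupOf]
  have h : (((a * b)⁻¹ * (b * a) : S) : G) = ⁅(b : G)⁻¹, (a : G)⁻¹⁆ := by
    push_cast; group
  rw [h]
  exact commutator_mem_commutator (Subgroup.mem_top _) (S.inv_mem a.2)

/-- The commutative group structure on `S/[G,S]`. -/
noncomputable def auxCommGroup (S : Subgroup G) [S.Normal] :
    CommGroup (S ⧸ (⁅(⊤ : Subgroup G), S⁆.subgroupOf S)) :=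
  { (inferInstance : Group (S ⧸ (⁅(⊤ : Subgroup G), S⁆.subgroupOf S))) with
    mul_comm := aux_quot_mul_comm S }

lemma aux_commutator_top_sup (K L : Subgroup G) [K.Normal] [L.Normal] :
    ⁅(⊤ : Subgroup G), K ⊔ L⁆ = ⁅(⊤ : Subgroup G), K⁆ ⊔ ⁅(⊤ : Subgroup G), L⁆ := by
  refine le_antisymm ?_ (sup_le (Subgroup.commutator_mono le_rfl le_sup_left)
    (Subgroup.commutator_mono le_rfl le_sup_right))
  rw [Subgroup.commutator_le]
  intro g _ x hx
  have hx' : x ∈ (K : Set G) * (L : Set G) := by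
    rw [← Subgroup.mul_normal K L]; exact hx
  obtain ⟨k, hk, l, hl, rfl⟩ := hx'
  have h1 : ⁅g, k * l⁆ = ⁅g, k⁆ * (k * ⁅g, l⁆ * k⁻¹) := by group
  rw [h1]
  have hN : (⁅(⊤ : Subgroup G), K⁆ ⊔ ⁅(⊤ : Subgroup G), L⁆).Normal := inferInstance
  exact Subgroup.mul_mem _
    (SetLike.le_def.mp le_sup_left (commutator_mem_commutator (Subgroup.mem_top _) hk))
    (hN.conj_mem _ (SetLike.le_def.mp le_sup_right
      (commutator_mem_commutator (Subgroup.mem_top _) hl)) k)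

/-- The main induction. -/
lemma aux_main (G : Type*) [Group G] [Group.FG G] :
    ∀ (n : ℕ) (S : Subgroup G) (_hN : S.Normal), (⊤ : Subgroup G).lowerCentralSeries n ≤ S →
      Group.FG (S ⧸ (⁅(⊤ : Subgroup G), S⁆.subgroupOf S)) := by
  intro n
  induction n with
  | zero =>
    intro S hN hS
    haveI := hN
    obtain rfl : S = ⊤ := top_le_iff.1 hS
    haveI : Group.FG ((⊤ : Subgroup G)) :=
      (Group.fg_iff_subgroup_fg ⊤).2 (Group.fg_def.1 inferInstance)
    infer_instance
  | succ n ih =>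
    intro S hN hS
    haveI := hN
    set Γ : Subgroup G := (⊤ : Subgroup G).lowerCentralSeries n with hΓdef
    have hsucc : (⊤ : Subgroup G).lowerCentralSeries (n + 1) = ⁅(⊤ : Subgroup G), Γ⁆ := by
      rw [Subgroup.commutator_comm]; rfl
    have hΓ1S : ⁅(⊤ : Subgroup G), Γ⁆ ≤ S := hsucc ▸ hS
    set K : Subgroup G := ⁅(⊤ : Subgroup G), S⁆ with hKdef
    have hKS : K ≤ S := Subgroup.commutator_le_right ⊤ S
    set π : S →* (S ⧸ K.subgroupOf S) := QuotientGroup.mk' (K.subgroupOf S) with hπdef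
    -- basic facts about π
    have hπ1 : ∀ (x : S), (x : G) ∈ K → π x = 1 := by
      intro x hx
      exact (QuotientGroup.eq_one_iff x).mpr (Subgroup.mem_subgroupOf.mpr hx)
    have hconj : ∀ (g : G) (x y : S), (x : G) = g * (y : G) * g⁻¹ → π x = π y := by
      intro g x y hxy
      show QuotientGroup.mk x = QuotientGroup.mk y
      rw [QuotientGroup.eq, Subgroup.mem_subgroupOf]
      have h : ((x⁻¹ * y : S) : G) = ⁅g, (y : G)⁻¹⁆ := by
        push_cast [hxy]; group
      rw [h]
      exact commutator_mem_commutator (Subgroup.mem_top _) (S.inv_mem y.2)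
    have hmemΓ : ∀ (g : G) (c : G), c ∈ Γ → ⁅g, c⁆ ∈ S := fun g c hc =>
      hΓ1S (commutator_mem_commutator (Subgroup.mem_top _) hc)
    -- the bilinear-ish commutator map
    set φ : G → Γ → (S ⧸ K.subgroupOf S) :=
      fun g c => π ⟨⁅g, (c : G)⁆, hmemΓ g c c.2⟩ with hφdef
    have hφ_mul_right : ∀ (g : G) (c d : Γ), φ g (c * d) = φ g c * φ g d := by
      intro g c d
      have hmemconj : (c : G) * ⁅g, (d : G)⁆ * (c : G)⁻¹ ∈ S :=
        hN.conj_mem _ (hmemΓ g d d.2) c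
      have hid : (⟨⁅g, ((c * d : Γ) : G)⁆, hmemΓ g _ (c * d).2⟩ : S)
          = ⟨⁅g, (c : G)⁆, hmemΓ g c c.2⟩ * ⟨(c : G) * ⁅g, (d : G)⁆ * (c : G)⁻¹, hmemconj⟩ := by
        ext
        push_cast
        group
      show π _ = π _ * π _
      rw [hid, map_mul]
      congr 1
      exact hconj (c : G) _ ⟨⁅g, (d : G)⁆, hmemΓ g d d.2⟩ rfl
    have hφ_mul_left : ∀ (g h : G) (c : Γ), φ (g * h) c = φ g c * φ h c := by
      intro g h c
      have hmemconj : g * ⁅h, (c : G)⁆ * g⁻¹ ∈ S := hN.conj_mem _ (hmemΓ h c c.2) g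
      have hid : (⟨⁅g * h, (c : G)⁆, hmemΓ _ c c.2⟩ : S)
          = ⟨g * ⁅h, (c : G)⁆ * g⁻¹, hmemconj⟩ * ⟨⁅g, (c : G)⁆, hmemΓ g c c.2⟩ := by
        ext
        push_cast
        group
      show π _ = π _ * π _
      rw [hid, map_mul, hconj g _ ⟨⁅h, (c : G)⁆, hmemΓ h c c.2⟩ rfl]
      exact aux_quot_mul_comm S _ _
    have hφ_ker : ∀ (g : G) (c : Γ), (c : G) ∈ S → φ g c = 1 := by
      intro g c hc
      exact hπ1 _ (commutator_mem_commutator (Subgroup.mem_top _) hc)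
    -- lift to the quotient Qn
    set fgh : G → (Γ →* (S ⧸ K.subgroupOf S)) :=
      fun g => MonoidHom.mk' (φ g) (hφ_mul_right g) with hfghdef
    set liftφ : G → ((Γ ⧸ (⁅(⊤ : Subgroup G), Γ⁆.subgroupOf Γ)) →* (S ⧸ K.subgroupOf S)) :=
      fun g => QuotientGroup.lift (⁅(⊤ : Subgroup G), Γ⁆.subgroupOf Γ) (fgh g)
        (fun c hc => hφ_ker g c (hΓ1S (Subgroup.mem_subgroupOf.mp hc))) with hliftdef
    have hlift_mk : ∀ (g : G) (c : Γ), liftφ g (QuotientGroup.mk c) = φ g c := fun g c => rfl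
    set hom2 : (Γ ⧸ (⁅(⊤ : Subgroup G), Γ⁆.subgroupOf Γ)) → (G →* (S ⧸ K.subgroupOf S)) :=
      fun q => MonoidHom.mk' (fun g => liftφ g q) (by
        intro g h
        induction q using QuotientGroup.induction_on with | _ c =>
        exact hφ_mul_left g h c) with hhom2def
    -- generators
    obtain ⟨U, hU, hUfin⟩ := Group.fg_iff.1 (inferInstance : Group.FG G)
    have IH2 : Group.FG (Γ ⧸ (⁅(⊤ : Subgroup G), Γ⁆.subgroupOf Γ)) :=
      ih Γ inferInstance le_rfl
    obtain ⟨V, hV, hVfin⟩ := Group.fg_iff.1 IH2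
    set Ψ : Set (S ⧸ K.subgroupOf S) := Set.image2 (fun u q => liftφ u q) U V with hΨdef
    set Z : Subgroup (S ⧸ K.subgroupOf S) := Subgroup.closure Ψ with hZdef
    have stepA : ∀ (g : G) (q : Γ ⧸ (⁅(⊤ : Subgroup G), Γ⁆.subgroupOf Γ)),
        liftφ g q ∈ Z := by
      intro g q
      have h2 : ∀ q' ∈ V, liftφ g q' ∈ Z := by
        intro q' hq'
        have hg : hom2 q' g ∈ Subgroup.map (hom2 q') (Subgroup.closure U) := by
          rw [hU]; exact ⟨g, Subgroup.mem_top g, rfl⟩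
        rw [MonoidHom.map_closure] at hg
        refine (Subgroup.closure_le Z).2 ?_ hg
        rintro a ⟨u, hu, rfl⟩
        exact Subgroup.subset_closure (Set.mem_image2_of_mem hu hq')
      have h1 : liftφ g q ∈ Subgroup.map (liftφ g) (Subgroup.closure V) := by
        rw [hV]; exact ⟨q, Subgroup.mem_top q, rfl⟩
      rw [MonoidHom.map_closure] at h1
      refine (Subgroup.closure_le Z).2 ?_ h1
      rintro a ⟨q', hq', rfl⟩
      exact h2 q' hq'
    -- the subgroup T and M
    set T : Subgroup G := S ⊔ Γ with hTdef
    haveI : T.Normal := inferInstance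
    set M : Subgroup G := ⁅(⊤ : Subgroup G), T⁆ with hMdef
    have hM : M = K ⊔ ⁅(⊤ : Subgroup G), Γ⁆ := aux_commutator_top_sup S Γ
    have hMS : M ≤ S := hM.le.trans (sup_le hKS hΓ1S)
    have hKM : K ≤ M := le_sup_left.trans hM.ge
    set B' : Subgroup (S ⧸ K.subgroupOf S) :=
      Subgroup.map (QuotientGroup.mk' (K.subgroupOf S)) (M.subgroupOf S) with hB'def
    -- B' = Z
    have hZB' : Z ≤ B' := by
      refine (Subgroup.closure_le B').2 ?_
      rintro a ⟨u, hu, q, hq, rfl⟩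
      obtain ⟨c, rfl⟩ := QuotientGroup.mk_surjective q
      show liftφ u (QuotientGroup.mk c) ∈ B'
      refine ⟨⟨⁅u, (c : G)⁆, hmemΓ u c c.2⟩, ?_, rfl⟩
      show (⟨⁅u, (c : G)⁆, hmemΓ u c c.2⟩ : S) ∈ M.subgroupOf S
      rw [Subgroup.mem_subgroupOf]
      exact (le_sup_right.trans hM.ge)
        (commutator_mem_commutator (Subgroup.mem_top _) c.2)
    have hB'Z : B' ≤ Z := by
      rintro a ⟨x, hxM, rfl⟩
      rw [SetLike.mem_coe, Subgroup.mem_subgroupOf, hM] at hxM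
      have hx' : (x : G) ∈ (K : Set G) * ((⁅(⊤ : Subgroup G), Γ⁆ : Subgroup G) : Set G) := by
        rw [← Subgroup.mul_normal K ⁅(⊤ : Subgroup G), Γ⁆]; exact hxM
      obtain ⟨k, hk, w, hw, hkw⟩ := hx'
      have hkS : k ∈ S := hKS hk
      have hwS : w ∈ S := hΓ1S hw
      have hxsplit : x = (⟨k, hkS⟩ : S) * ⟨w, hwS⟩ := Subtype.ext hkw.symm
      have hwZ : ∀ w, w ∈ ⁅(⊤ : Subgroup G), Γ⁆ → ∃ hwS : w ∈ S, π ⟨w, hwS⟩ ∈ Z := by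
        intro w hw
        rw [Subgroup.commutator_def] at hw
        induction hw using Subgroup.closure_induction with
        | mem x hx =>
          obtain ⟨g, -, c, hc, rfl⟩ := hx
          refine ⟨hmemΓ g c hc, ?_⟩
          have : π ⟨⁅g, c⁆, hmemΓ g c hc⟩ = liftφ g (QuotientGroup.mk ⟨c, hc⟩) := rfl
          rw [this]
          exact stepA g _
        | one => exact ⟨S.one_mem, by rw [show ((⟨1, S.one_mem⟩ : S)) = 1 from rfl, map_one]; exact Z.one_mem⟩
        | mul x y hx hy ihx ihy =>
          obtain ⟨hxS, hxZ⟩ := ihx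
          obtain ⟨hyS, hyZ⟩ := ihy
          refine ⟨S.mul_mem hxS hyS, ?_⟩
          have : (⟨x * y, S.mul_mem hxS hyS⟩ : S) = ⟨x, hxS⟩ * ⟨y, hyS⟩ := rfl
          rw [this, map_mul]
          exact Z.mul_mem hxZ hyZ
        | inv x hx ihx =>
          obtain ⟨hxS, hxZ⟩ := ihx
          refine ⟨S.inv_mem hxS, ?_⟩
          have : (⟨x⁻¹, S.inv_mem hxS⟩ : S) = (⟨x, hxS⟩ : S)⁻¹ := rfl
          rw [this, map_inv]
          exact Z.inv_mem hxZ
      obtain ⟨hwS', hwZ'⟩ := hwZ w hw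
      show π x ∈ Z
      rw [hxsplit, map_mul, hπ1 ⟨k, hkS⟩ hk, one_mul]
      have : π ⟨w, hwS⟩ = π ⟨w, hwS'⟩ := rfl
      rw [this]
      exact hwZ'
    have hB'eq : B' = Z := le_antisymm hB'Z hZB'
    -- B' is finitely generated
    have hFGB' : Group.FG B' := by
      rw [Group.fg_iff_subgroup_fg, hB'eq]
      exact (Subgroup.fg_iff Z).2 ⟨Ψ, rfl, Set.Finite.image2 _ hUfin hVfin⟩
    -- A ⧸ B' is finitely generated
    have hFGquot : Group.FG ((S ⧸ K.subgroupOf S) ⧸ B') := by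
      -- S ⧸ M.subgroupOf S is f.g.
      set ψ : S →* (T ⧸ (⁅(⊤ : Subgroup G), T⁆.subgroupOf T)) :=
        (QuotientGroup.mk' (⁅(⊤ : Subgroup G), T⁆.subgroupOf T)).comp
          (Subgroup.inclusion (le_sup_left : S ≤ T)) with hψdef
      have hker : ψ.ker = M.subgroupOf S := by
        ext x
        rw [MonoidHom.mem_ker, Subgroup.mem_subgroupOf]
        show QuotientGroup.mk _ = 1 ↔ _
        rw [QuotientGroup.eq_one_iff, Subgroup.mem_subgroupOf]
        rfl
      haveI : Group.FG (T ⧸ (⁅(⊤ : Subgroup G), T⁆.subgroupOf T)) :=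
        ih T inferInstance le_sup_right
      letI : CommGroup (T ⧸ (⁅(⊤ : Subgroup G), T⁆.subgroupOf T)) := auxCommGroup T
      have hFGrange : Group.FG ψ.range := @aux_fg_subgroup_of_comm _ _ (by exact ih T inferInstance le_sup_right) ψ.range
      have e1 : (S ⧸ M.subgroupOf S) ≃* ψ.range :=
        (QuotientGroup.quotientMulEquivOfEq hker.symm).trans
          (QuotientGroup.quotientKerEquivRange ψ)
      have hFGSM : Group.FG (S ⧸ M.subgroupOf S) :=
        Group.fg_of_surjective (f := e1.symm.toMonoidHom) (by exact e1.symm.surjective)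
      have hle : K.subgroupOf S ≤ M.subgroupOf S := fun x hx =>
        Subgroup.mem_subgroupOf.mpr (hKM (Subgroup.mem_subgroupOf.mp hx))
      have e2 : ((S ⧸ K.subgroupOf S) ⧸ B') ≃* (S ⧸ M.subgroupOf S) :=
        QuotientGroup.quotientQuotientEquivQuotient (K.subgroupOf S) (M.subgroupOf S) hle
      exact Group.fg_of_surjective (f := e2.symm.toMonoidHom) (by exact e2.symm.surjective)
    letI : CommGroup (S ⧸ K.subgroupOf S) := auxCommGroup S
    haveI : B'.Normal := inferInstance
    exact aux_fg_of_fg_of_fg_quotient B' hFGB' hFGquot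

end Aux

theorem finitely_generated_abelian_quotient
    (G : Type*) [Group G] [Group.FG G] (n : ℕ) (S : Subgroup G) [S.Normal]
    (hS : (⊤ : Subgroup G).lowerCentralSeries n ≤ S) :
    Group.FG (S ⧸ (⁅(⊤ : Subgroup G), S⁆.subgroupOf S)) ∧
      ∀ x y : S ⧸ (⁅(⊤ : Subgroup G), S⁆.subgroupOf S), x * y = y * x := by
  exact ⟨aux_main G n S ‹_› hS, aux_quot_mul_comm S⟩
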